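/- Let G be a pertinent group and H a normal 2-subgroup of G of order 2^m. Then m is even. -/

import Mathlib

open MulAction Equiv

lemma perm3_aux : ∀ π : Equiv.Perm (Fin 3), π ^ 3 = 1 → π ≠ 1 → ∀ i, π i ≠ i := by decide

lemma orderOf_conj' {G : Type*} [Group G] (g a : G) :
    orderOf (g * a * g⁻¹) = orderOf a := by
  simpa using orderOf_injective (MulAut.conj g).toMonoidHom (MulAut.conj g).injective a

/-- Conjugation as a permutation of the set of involutions. -/
def conjPerm {G : Type*} [Group G] (g : G) : Equiv.Perm {x : G // orderOf x = 2} :=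
  Equiv.subtypeEquiv (MulAut.conj g).toEquiv (fun a => by
    simp only [MulEquiv.toEquiv_eq_coe, EquivLike.coe_coe, MulAut.conj_apply]
    rw [orderOf_conj'])

@[simp] lemma conjPerm_apply {G : Type*} [Group G] (g : G) (x : {x : G // orderOf x = 2}) :
    ((conjPerm g x : {x : G // orderOf x = 2}) : G) = g * x * g⁻¹ := rfl

/-- Conjugation as a homomorphism into permutations of involutions. -/
def conjHom (G : Type*) [Group G] : G →* Equiv.Perm {x : G // orderOf x = 2} where
  toFun := conjPerm
  map_one' := by ext x; simp
  map_mul' g h := by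
    ext x
    simp [mul_assoc]

/-- A finite group is *pertinent* if it has exactly three involutions and
they are pairwise conjugate. -/
def Pertinent (G : Type*) [Group G] : Prop :=
  Finite G ∧ {g : G | orderOf g = 2}.ncard = 3 ∧
    ∀ a b : G, orderOf a = 2 → orderOf b = 2 → IsConj a b

theorem stmt_5 (G : Type*) [Group G] (hG : Pertinent G) (H : Subgroup G) [H.Normal]
    (m : ℕ) (hH : Nat.card H = 2 ^ m) : Even m := by
  classical
  obtain ⟨hfin, hcard, hconj⟩ := hG
  haveI : Finite G := hfin
  haveI : Fact (Nat.Prime 3) := ⟨by norm_num⟩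
  set T := {x : G // orderOf x = 2} with hTdef
  have hT : Nat.card T = 3 := by
    rw [← hcard]; exact Nat.card_coe_set_eq _
  haveI : Finite T := Subtype.finite
  have hTne : Nonempty T := by
    rcases Nat.card_pos_iff.mp (by rw [hT]; norm_num) with ⟨h1, _⟩
    exact h1
  obtain ⟨x₀⟩ := hTne
  set R := (conjHom G).range with hRdef
  -- the range acts transitively on T
  have horb : MulAction.orbit R x₀ = Set.univ := by
    ext y
    simp only [Set.mem_univ, iff_true, MulAction.mem_orbit_iff]
    obtain ⟨c, hc⟩ := isConj_iff.mp (hconj x₀.1 y.1 x₀.2 y.2)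
    refine ⟨⟨conjHom G c, ⟨c, rfl⟩⟩, ?_⟩
    exact Subtype.ext (by rw [← hc]; rfl)
  have h3R : (3 : ℕ) ∣ Nat.card R := by
    have h1 : Nat.card (MulAction.orbit R x₀) = 3 := by
      rw [horb, Nat.card_congr (Equiv.Set.univ T), hT]
    have h2 : Nat.card (MulAction.orbit R x₀) ∣ Nat.card R := by
      rw [Nat.card_congr (MulAction.orbitEquivQuotientStabilizer R x₀)]
      exact (MulAction.stabilizer R x₀).index_dvd_card
    rwa [h1] at h2
  obtain ⟨σ', hσ'⟩ := exists_prime_orderOf_dvd_card' 3 h3R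
  have hσ : orderOf (σ' : Equiv.Perm T) = 3 := by
    exact (orderOf_injective R.subtype R.subtype_injective σ').trans hσ'
  obtain ⟨x, hx⟩ := σ'.2
  have h3x : (3 : ℕ) ∣ orderOf x := hσ ▸ (hx ▸ orderOf_map_dvd (conjHom G) x)
  set n := orderOf x with hn
  have hn0 : n ≠ 0 := (orderOf_pos x).ne'
  set a := n.factorization 3 with ha
  set t := n / 3 ^ a with ht
  have htdvd : t ∣ n := Nat.div_dvd_of_dvd (Nat.ordProj_dvd n 3)
  have h3t : ¬ (3 : ℕ) ∣ t := Nat.not_dvd_ordCompl (by norm_num) hn0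
  have ht0 : t ≠ 0 := by
    intro h; exact hn0 (by simpa [h] using (Nat.div_mul_cancel (Nat.ordProj_dvd n 3)).symm ▸ (by rw [← Nat.ordProj_mul_ordCompl_eq_self n 3, ← ht]; simp [h]))
  set g := x ^ t with hgdef
  have hg3 : orderOf g = 3 ^ a := by
    rw [hgdef, orderOf_pow, ← hn, Nat.gcd_eq_right htdvd]
    rw [ht]
    rw [Nat.div_div_self (Nat.ordProj_dvd n 3) hn0]
  -- the image of g is σ'^t which has order 3 and no fixed point
  set σt := (σ' : Equiv.Perm T) ^ t with hσt
  have hgσ : conjHom G g = σt := by rw [hgdef, map_pow, hx]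
  have hσt3 : orderOf σt = 3 := by
    rw [hσt, orderOf_pow, hσ, Nat.Coprime.gcd_eq_one, Nat.div_one]
    exact (Nat.Prime.coprime_iff_not_dvd (by norm_num)).mpr h3t
  have hnofix : ∀ y : T, σt y ≠ y := by
    haveI := Fintype.ofFinite T
    have hcT : Fintype.card T = 3 := by rw [← Nat.card_eq_fintype_card, hT]
    obtain e : T ≃ Fin 3 := Fintype.equivFinOfCardEq hcT
    set π : Equiv.Perm (Fin 3) := (e.symm.trans σt).trans e with hπ
    have happly : ∀ i, π i = e (σt (e.symm i)) := fun i => rfl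
    have hst1 : σt ^ 3 = 1 := by rw [← hσt3]; exact pow_orderOf_eq_one _
    have hchain : ∀ y, σt (σt (σt y)) = y := by
      intro y
      have : (σt ^ 3) y = y := by rw [hst1]; rfl
      simpa [pow_succ, Equiv.Perm.mul_apply] using this
    have hπ3 : π ^ 3 = 1 := by
      ext i
      simp only [pow_succ, pow_zero, one_mul, Equiv.Perm.mul_apply, Equiv.Perm.one_apply]
      rw [happly, happly, happly]
      simp [hchain]
    have hπne : π ≠ 1 := by
      intro h
      have hone : σt = 1 := by
        ext y
        have := Equiv.ext_iff.mp h (e y)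
        rw [happly] at this
        exact congrArg Subtype.val (by simpa using this)
      rw [hone] at hσt3; simp at hσt3
    intro y hy
    exact perm3_aux π hπ3 hπne (e y) (by rw [happly]; simp [hy])
  -- the cyclic group generated by g is a 3-group acting on H with only trivial fixed point
  set K := Subgroup.zpowers g with hK
  have hKp : IsPGroup 3 K := IsPGroup.of_card (by rw [Nat.card_zpowers, hg3])
  letI : MulAction K H := MulAction.compHom _ ((MulAut.conjNormal (H := H)).comp K.subtype)
  have hsmul : ∀ (k : K) (h : H), ((k • h : H) : G) = (k : G) * h * (k : G)⁻¹ := by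
    intro k h; rfl
  have hmod : Nat.card H ≡ Nat.card (MulAction.fixedPoints K H) [MOD 3] :=
    hKp.card_modEq_card_fixedPoints H
  set C : Subgroup G := H ⊓ Subgroup.centralizer {g} with hC
  have hfixequiv : MulAction.fixedPoints K H ≃ C := by
    refine ⟨fun y => ⟨y.1.1, y.1.2, ?_⟩, fun c => ⟨⟨c.1, c.2.1⟩, ?_⟩, fun y => rfl, fun c => rfl⟩
    · show ((y : H) : G) ∈ Subgroup.centralizer {g}
      rw [Subgroup.mem_centralizer_singleton_iff]
      have := y.2 ⟨g, Subgroup.mem_zpowers g⟩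
      have h1 : g * y.1.1 * g⁻¹ = y.1.1 := by
        have := congrArg (Subtype.val) this
        rw [hsmul] at this
        exact this
      rw [mul_inv_eq_iff_eq_mul] at h1
      exact h1.symm
    · intro k
      obtain ⟨z, hz⟩ := k.2
      have hcomm : Commute (c : G) g :=
        (Subgroup.mem_centralizer_singleton_iff.mp c.2.2)
      have hcz : Commute ((k : K) : G) (c : G) := by
        rw [← hz]; exact (hcomm.zpow_right z).symm
      apply Subtype.ext
      rw [hsmul]
      rw [hcz.eq, mul_assoc, mul_inv_cancel, mul_one]
  have hCcard : Nat.card C = 1 := by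
    have hdvd : Nat.card C ∣ 2 ^ m := hH ▸ Subgroup.card_dvd_of_le inf_le_left
    obtain ⟨k, hk, hck⟩ := (Nat.dvd_prime_pow Nat.prime_two).mp hdvd
    rcases Nat.eq_zero_or_pos k with h0 | hpos
    · rw [hck, h0, pow_zero]
    · exfalso
      have h2C : (2 : ℕ) ∣ Nat.card C := by
        rw [hck]; exact dvd_pow_self 2 hpos.ne'
      obtain ⟨c, hc⟩ := exists_prime_orderOf_dvd_card' 2 h2C
      have hcG : orderOf (c : G) = 2 :=
        (orderOf_injective C.subtype C.subtype_injective c).trans hc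
      have hcomm : (c : G) * g = g * (c : G) :=
        Subgroup.mem_centralizer_singleton_iff.mp c.2.2
      refine hnofix ⟨(c : G), hcG⟩ ?_
      rw [← hgσ]
      apply Subtype.ext
      show g * (c : G) * g⁻¹ = (c : G)
      rw [← hcomm, mul_assoc, mul_inv_cancel, mul_one]
  have hmod2 : (2 : ℕ) ^ m ≡ 1 [MOD 3] := by
    rwa [hH, Nat.card_congr hfixequiv, hCcard] at hmod
  rcases Nat.even_or_odd m with he | ho
  · exact he
  · exfalso
    obtain ⟨k, hk⟩ := ho
    have h4 : (4 : ℕ) ^ k ≡ 1 ^ k [MOD 3] := Nat.ModEq.pow k (by norm_num [Nat.ModEq])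
    have hpow : (2 : ℕ) ^ m = 4 ^ k * 2 := by
      rw [hk, pow_add, pow_mul]; norm_num
    have h2 : (2 : ℕ) ^ m ≡ 2 [MOD 3] := by
      rw [hpow]; simpa using h4.mul_right 2
    have h12 : (1 : ℕ) ≡ 2 [MOD 3] := hmod2.symm.trans h2
    exact absurd h12 (by norm_num [Nat.ModEq])
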